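/- Let L be a complete lattice, A ⊆ L a subset compact in L, and let ≺₁ and ≺₂ be binary relations on A each satisfying (SF), (DD) and (WO). Then ≺₁ ⊆ ≺₂ (i.e., a ≺₁ b implies a ≺₂ b for all a, b ∈ A) if and only if for every a ∈ A: sInf {c ∈ A | a ≺₂ c} ≤ sInf {c ∈ A | a ≺₁ c}. -/

import Mathlib

/-- `A` is compact in `L`. -/
def CompactIn {L : Type*} [CompleteLattice L] (A : Set L) : Prop :=
  ∀ F I : Set L, F ⊆ A → F.Nonempty → DirectedOn (· ≥ ·) F →
    I ⊆ A → I.Nonempty → DirectedOn (· ≤ ·) I →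
    sInf F ≤ sSup I → ∃ a ∈ F, ∃ b ∈ I, a ≤ b

theorem stmt_16 {L : Type*} [CompleteLattice L] (A : Set L)
    (hcompact : CompactIn A) (r₁ r₂ : L → L → Prop)
    (hSF₁ : ∀ a ∈ A, ∃ b ∈ A, r₁ a b)
    (hDD₁ : ∀ a ∈ A, ∀ x₁ ∈ A, ∀ x₂ ∈ A, r₁ a x₁ → r₁ a x₂ →
      ∃ x ∈ A, r₁ a x ∧ x ≤ x₁ ∧ x ≤ x₂)
    (hWO₁ : ∀ b ∈ A, ∀ x ∈ A, ∀ y ∈ A, r₁ b x → x ≤ y → r₁ b y)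
    (hSF₂ : ∀ a ∈ A, ∃ b ∈ A, r₂ a b)
    (hDD₂ : ∀ a ∈ A, ∀ x₁ ∈ A, ∀ x₂ ∈ A, r₂ a x₁ → r₂ a x₂ →
      ∃ x ∈ A, r₂ a x ∧ x ≤ x₁ ∧ x ≤ x₂)
    (hWO₂ : ∀ b ∈ A, ∀ x ∈ A, ∀ y ∈ A, r₂ b x → x ≤ y → r₂ b y) :
    (∀ a ∈ A, ∀ b ∈ A, r₁ a b → r₂ a b) ↔
      ∀ a ∈ A, sInf {c | c ∈ A ∧ r₂ a c} ≤ sInf {c | c ∈ A ∧ r₁ a c} := by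
  constructor
  · intro h a ha
    exact sInf_le_sInf (fun c hc => ⟨hc.1, h a ha c hc.1 hc.2⟩)
  · intro h a ha b hb hab
    set F : Set L := {c | c ∈ A ∧ r₂ a c} with hF
    have hFA : F ⊆ A := fun c hc => hc.1
    have hFne : F.Nonempty := by
      obtain ⟨c, hcA, hc⟩ := hSF₂ a ha; exact ⟨c, hcA, hc⟩
    have hFdir : DirectedOn (· ≥ ·) F := by
      rintro x ⟨hxA, hx⟩ y ⟨hyA, hy⟩
      obtain ⟨z, hzA, hz, hzx, hzy⟩ := hDD₂ a ha x hxA y hyA hx hy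
      exact ⟨z, ⟨hzA, hz⟩, hzx, hzy⟩
    have hle : sInf F ≤ sSup {b} := by
      rw [sSup_singleton]
      exact le_trans (h a ha) (sInf_le ⟨hb, hab⟩)
    obtain ⟨c, hcF, d, hd, hcd⟩ := hcompact F {b} hFA hFne hFdir
      (by simpa using hb) ⟨b, rfl⟩ (directedOn_singleton b) hle
    rw [Set.mem_singleton_iff] at hd
    exact hWO₂ a ha c hcF.1 b hb hcF.2 (hd ▸ hcd)
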